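/- arXiv:2008.12392 — 3 statements merged into one kernel-verified Lean document; each statement's English description precedes it below -/
import Mathlib

section
/- Let c > 1 with c ∉ ℕ and let η > 0 be sufficiently small. There is a constant C > 0 (depending only on c and η) such that for all sufficiently large X the following holds: for any complex numbers (cₙ) with |cₙ| ≤ 1, let V(y) be either Σ_{X/8 < n ≤ X} cₙ e(n^c y) or Σ_{X/8 < n ≤ X} cₙ e(⌊n^c⌋ y). Then for every B with 0 < B < X^{2η}, one has ∫_B^{2B} |V(y)|² dy ≤ C·( X·B + X^{2−c}·log X ). -/
open Real MeasureTheory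

/-- `e θ = exp(2πiθ)`. -/
noncomputable def e (θ : ℝ) : ℂ := Complex.exp (2 * Real.pi * Complex.I * θ)


lemma e_cont (μ : ℝ) : Continuous fun y : ℝ => e (μ * y) := by
  unfold e; fun_prop

lemma abs_e (θ : ℝ) : ‖e θ‖ = 1 := by
  unfold e
  rw [show (2 * (Real.pi:ℂ) * Complex.I * (θ:ℝ)) = ((2*Real.pi*θ : ℝ) : ℂ) * Complex.I by push_cast; ring]
  exact Complex.norm_exp_ofReal_mul_I _

lemma e_zero : e 0 = 1 := by simp [e]

lemma conj_e (θ : ℝ) : (starRingEnd ℂ) (e θ) = e (-θ) := by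
  rw [e, e, ← Complex.exp_conj]
  congr 1
  simp only [map_mul, Complex.conj_I, Complex.conj_ofReal, map_ofNat]
  push_cast; ring

lemma e_mul_conj (a b : ℝ) : e a * (starRingEnd ℂ) (e b) = e (a - b) := by
  rw [conj_e, e, e, e, ← Complex.exp_add]
  congr 1
  push_cast; ring

lemma integral_e_ne {μ : ℝ} (B : ℝ) (hμ : μ ≠ 0) :
    ‖∫ y in B..(2*B), e (μ * y)‖ ≤ 1 / (Real.pi * |μ|) := by
  have hc : (2 * (Real.pi:ℂ) * Complex.I * μ) ≠ 0 := by
    simp [Real.pi_ne_zero, Complex.I_ne_zero, hμ, Complex.ofReal_eq_zero]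
  have h1 : ∀ y : ℝ, e (μ * y) = Complex.exp ((2 * (Real.pi:ℂ) * Complex.I * μ) * y) := by
    intro y; rw [e]; congr 1; push_cast; ring
  simp_rw [h1]
  rw [integral_exp_mul_complex hc, norm_div]
  have h2 : ∀ y : ℝ, ‖Complex.exp ((2 * (Real.pi:ℂ) * Complex.I * μ) * y)‖ = 1 := by
    intro y; rw [← h1]; exact abs_e _
  have h3 : ‖Complex.exp (2 * (Real.pi:ℂ) * Complex.I * μ * (2*B:ℝ))
      - Complex.exp (2 * (Real.pi:ℂ) * Complex.I * μ * (B:ℝ))‖ ≤ 2 := by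
    refine (norm_sub_le _ _).trans ?_
    rw [h2, h2]; norm_num
  have h4 : ‖2 * (Real.pi:ℂ) * Complex.I * μ‖ = 2 * Real.pi * |μ| := by
    simp [norm_mul, Complex.norm_real, Complex.norm_I, Complex.norm_two,
      abs_of_pos Real.pi_pos]
  rw [h4]
  have hpos : 0 < 2 * Real.pi * |μ| := by positivity
  calc ‖_‖ / (2 * Real.pi * |μ|) ≤ 2 / (2 * Real.pi * |μ|) := by gcongr
    _ = 1 / (Real.pi * |μ|) := by field_simp

lemma rpow_sep {c : ℝ} (hc : 1 < c) {x m n : ℝ} (hx : 0 < x) (hn : x ≤ n) (hmn : n ≤ m) :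
    c * x^(c-1) * (m - n) ≤ m^c - n^c := by
  have hn0 : 0 < n := hx.trans_le hn
  have hm0 : 0 < m := hn0.trans_le hmn
  have hB := one_add_mul_self_le_rpow_one_add (s := m/n - 1) (by
    have : 0 ≤ m/n - 1 := by rw [le_sub_iff_add_le, zero_add, le_div_iff₀ hn0, one_mul]; exact hmn
    linarith) hc.le
  rw [show (1:ℝ) + (m/n - 1) = m/n by ring] at hB
  have h1 : n^c * (1 + c * (m/n - 1)) ≤ n^c * (m/n)^c :=
    mul_le_mul_of_nonneg_left hB (Real.rpow_nonneg hn0.le c)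
  have h2 : n^c * (m/n)^c = m^c := by
    rw [← Real.mul_rpow hn0.le (by positivity), mul_div_cancel₀ _ hn0.ne']
  have hA : n^(c-1) = n^c / n := by
    rw [Real.rpow_sub hn0, Real.rpow_one]
  have h3 : n^c * (1 + c * (m/n - 1)) = n^c + c * n^(c-1) * (m - n) := by
    rw [hA]; field_simp
  have h4 : c * x^(c-1) * (m - n) ≤ c * n^(c-1) * (m - n) := by
    have := Real.rpow_le_rpow hx.le hn (by linarith : (0:ℝ) ≤ c - 1)
    have hmn' : 0 ≤ m - n := by linarith
    have h5 : c * x^(c-1) ≤ c * n^(c-1) := mul_le_mul_of_nonneg_left this (by linarith)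
    exact mul_le_mul_of_nonneg_right h5 hmn'
  linarith [h1, h2.le, h3]

lemma sum_over_inj (T : Finset ℕ) (d : ℕ → ℕ) (N : ℕ)
    (hinj : ∀ x ∈ T, ∀ y ∈ T, d x = d y → x = y)
    (hmem : ∀ n ∈ T, d n ∈ Finset.Icc 1 N) :
    ∑ n ∈ T, ((d n : ℝ))⁻¹ ≤ (harmonic N : ℝ) := by
  have hh : ((harmonic N : ℚ) : ℝ) = ∑ k ∈ Finset.Icc 1 N, ((k:ℝ))⁻¹ := by
    rw [harmonic_eq_sum_Icc]; push_cast; rfl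
  rw [hh]
  calc ∑ n ∈ T, ((d n : ℝ))⁻¹ = ∑ k ∈ T.image d, ((k:ℝ))⁻¹ := (Finset.sum_image (g := d) (f := fun k : ℕ => ((k:ℝ))⁻¹) hinj).symm
    _ ≤ ∑ k ∈ Finset.Icc 1 N, ((k:ℝ))⁻¹ := ?_
  refine Finset.sum_le_sum_of_subset_of_nonneg ?_ (by intros; positivity)
  intro k hk
  obtain ⟨n, hn, rfl⟩ := Finset.mem_image.mp hk
  exact hmem n hn

lemma sum_inv_dist (a b m : ℕ) (hm : m ∈ Finset.Ioc a b) :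
    ∑ n ∈ (Finset.Ioc a b).erase m, 1/|(m:ℝ)-(n:ℝ)| ≤ 2 * (1 + Real.log ((b - a : ℕ):ℝ)) := by
  set T := (Finset.Ioc a b).erase m with hT
  have hmem : ∀ n ∈ T, a < n ∧ n ≤ b ∧ n ≠ m := by
    intro n hn
    simp only [hT, Finset.mem_erase, Finset.mem_Ioc] at hn
    exact ⟨hn.2.1, hn.2.2, hn.1⟩
  have hm' : a < m ∧ m ≤ b := Finset.mem_Ioc.mp hm
  rw [← Finset.sum_filter_add_sum_filter_not T (· < m)]
  have h1 : ∑ n ∈ T.filter (· < m), 1/|(m:ℝ)-(n:ℝ)| ≤ (harmonic (b-a) : ℝ) := by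
    have heq : ∀ n ∈ T.filter (· < m), 1/|(m:ℝ)-(n:ℝ)| = (((m - n : ℕ):ℝ))⁻¹ := by
      intro n hn
      have hn' := Finset.mem_filter.mp hn
      have hlt : n < m := hn'.2
      have hc : (n:ℝ) < m := by exact_mod_cast hlt
      have h0 : ((m - n : ℕ):ℝ) = (m:ℝ) - n := by
        push_cast [Nat.cast_sub hlt.le]; ring
      rw [one_div, h0, abs_of_pos (by linarith)]
    rw [Finset.sum_congr rfl heq]
    apply sum_over_inj
    · intro x hx y hy hxy
      have hx' := Finset.mem_filter.mp hx; have hy' := Finset.mem_filter.mp hy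
      have : x < m := hx'.2; have : y < m := hy'.2
      omega
    · intro n hn
      have hn' := Finset.mem_filter.mp hn
      have h2 := hmem n hn'.1
      have : n < m := hn'.2
      simp only [Finset.mem_Icc]
      omega
  have h2 : ∑ n ∈ T.filter (fun n => ¬ n < m), 1/|(m:ℝ)-(n:ℝ)| ≤ (harmonic (b-a) : ℝ) := by
    have heq : ∀ n ∈ T.filter (fun n => ¬ n < m), 1/|(m:ℝ)-(n:ℝ)| = (((n - m : ℕ):ℝ))⁻¹ := by
      intro n hn
      have hn' := Finset.mem_filter.mp hn
      have hne := (hmem n hn'.1).2.2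
      have hlt : m < n := by omega
      have hc : (m:ℝ) < n := by exact_mod_cast hlt
      have h0 : ((n - m : ℕ):ℝ) = (n:ℝ) - m := by
        push_cast [Nat.cast_sub hlt.le]; ring
      rw [one_div, h0, abs_of_neg (by linarith), neg_sub]
    rw [Finset.sum_congr rfl heq]
    apply sum_over_inj
    · intro x hx y hy hxy
      have hx' := Finset.mem_filter.mp hx; have hy' := Finset.mem_filter.mp hy
      have := (hmem x hx'.1).2.2; have := (hmem y hy'.1).2.2
      have : ¬ x < m := hx'.2; have : ¬ y < m := hy'.2
      omega
    · intro n hn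
      have hn' := Finset.mem_filter.mp hn
      have h3 := hmem n hn'.1
      have : ¬ n < m := hn'.2
      simp only [Finset.mem_Icc]
      omega
  have hlog := harmonic_le_one_add_log (b - a)
  linarith

lemma abs_sep {S : Finset ℕ} {lam : ℕ → ℝ} {D : ℝ} (hD : 0 ≤ D)
    (h : ∀ m ∈ S, ∀ n ∈ S, n < m → D * ((m:ℝ) - n) ≤ lam m - lam n) :
    ∀ m ∈ S, ∀ n ∈ S, m ≠ n → D * |(m:ℝ) - (n:ℝ)| ≤ |lam m - lam n| := by
  intro m hm n hn hmn
  rcases lt_or_gt_of_ne hmn with h1 | h1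
  · have hc : (m:ℝ) < n := by exact_mod_cast h1
    have h2 := h n hn m hm h1
    rw [abs_of_neg (by linarith : (m:ℝ) - n < 0)]
    calc D * -((m:ℝ) - n) = D * ((n:ℝ) - m) := by ring
      _ ≤ lam n - lam m := h2
      _ ≤ |lam m - lam n| := by rw [abs_sub_comm]; exact le_abs_self _
  · have hc : (n:ℝ) < m := by exact_mod_cast h1
    have h2 := h m hm n hn h1
    rw [abs_of_pos (by linarith : (0:ℝ) < (m:ℝ) - n)]
    exact h2.trans (le_abs_self _)

lemma main_L2 (S : Finset ℕ) (cf : ℕ → ℂ) (hcf : ∀ n, ‖cf n‖ ≤ 1)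
    (lam : ℕ → ℝ) (B : ℝ) (hB : 0 < B) (D : ℝ) (hD : 0 < D)
    (hsep : ∀ m ∈ S, ∀ n ∈ S, m ≠ n → D * |(m:ℝ) - (n:ℝ)| ≤ |lam m - lam n|) :
    (∫ y in B..(2*B), ‖∑ n ∈ S, cf n * e (lam n * y)‖ ^ 2)
      ≤ S.card * B + (1/(Real.pi * D)) * ∑ m ∈ S, ∑ n ∈ S.erase m, 1/|(m:ℝ)-(n:ℝ)| := by
  set F : ℝ → ℂ := fun y => ∑ n ∈ S, cf n * e (lam n * y) with hF
  have hFcont : Continuous F := by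
    apply continuous_finset_sum; intro n _; exact continuous_const.mul (e_cont (lam n))
  have hGcont : Continuous fun y => F y * (starRingEnd ℂ) (F y) :=
    hFcont.mul (Complex.continuous_conj.comp hFcont)
  have hG : ∀ y, (‖F y‖:ℝ) ^ 2 = (F y * (starRingEnd ℂ) (F y)).re := by
    intro y; rw [Complex.mul_conj]; simp [Complex.sq_norm]
  have hexp : ∀ y, F y * (starRingEnd ℂ) (F y)
      = ∑ m ∈ S, ∑ n ∈ S, (cf m * (starRingEnd ℂ) (cf n)) * e ((lam m - lam n) * y) := by
    intro y
    rw [hF]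
    simp only [map_sum, Finset.sum_mul_sum, map_mul]
    refine Finset.sum_congr rfl fun m _ => Finset.sum_congr rfl fun n _ => ?_
    rw [mul_mul_mul_comm, e_mul_conj]
    congr 2
    ring
  have hint : (∫ y in B..(2*B), F y * (starRingEnd ℂ) (F y))
      = ∑ m ∈ S, ∑ n ∈ S, (cf m * (starRingEnd ℂ) (cf n)) * ∫ y in B..(2*B), e ((lam m - lam n) * y) := by
    simp_rw [hexp]
    rw [intervalIntegral.integral_finset_sum (fun m _ => Continuous.intervalIntegrable
      (by exact continuous_finset_sum _ fun n _ => continuous_const.mul (e_cont _)) _ _)]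
    refine Finset.sum_congr rfl fun m _ => ?_
    rw [intervalIntegral.integral_finset_sum (fun n _ => Continuous.intervalIntegrable
      (by exact continuous_const.mul (e_cont _)) _ _)]
    exact Finset.sum_congr rfl fun n _ => intervalIntegral.integral_const_mul _ _
  have key : (∫ y in B..(2*B), ‖F y‖ ^ 2)
      = (∫ y in B..(2*B), F y * (starRingEnd ℂ) (F y)).re := by
    have h := ContinuousLinearMap.intervalIntegral_comp_comm (μ := volume) Complex.reCLM
      (hGcont.intervalIntegrable B (2*B))
    simp only [Complex.reCLM_apply] at h
    rw [← h]
    exact intervalIntegral.integral_congr fun y _ => hG y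
  rw [key, hint]
  have hdiag : ∀ m ∈ S, ‖(cf m * (starRingEnd ℂ) (cf m))
      * ∫ y in B..(2*B), e ((lam m - lam m) * y)‖ ≤ B := by
    intro m _
    have h0 : (fun y : ℝ => e ((lam m - lam m) * y)) = fun _ : ℝ => (1:ℂ) := by
      funext y; rw [sub_self, zero_mul, e_zero]
    have h1 : (∫ y in B..(2*B), e ((lam m - lam m) * y)) = ((B:ℝ) : ℂ) := by
      rw [h0, intervalIntegral.integral_const]
      rw [Complex.real_smul, mul_one]
      push_cast; ring
    rw [h1, norm_mul, norm_mul, Complex.norm_real, Real.norm_eq_abs, abs_of_pos hB, Complex.norm_conj]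
    have h2 : ‖cf m‖ * ‖cf m‖ ≤ 1 :=
      mul_le_one₀ (hcf m) (norm_nonneg _) (hcf m)
    exact mul_le_of_le_one_left hB.le h2
  have hoff : ∀ m ∈ S, ∀ n ∈ S.erase m, ‖(cf m * (starRingEnd ℂ) (cf n))
      * ∫ y in B..(2*B), e ((lam m - lam n) * y)‖ ≤ (1/(Real.pi * D)) * (1/|(m:ℝ)-(n:ℝ)|) := by
    intro m hm n hn
    have hne : n ≠ m := (Finset.mem_erase.mp hn).1
    have hnS : n ∈ S := (Finset.mem_erase.mp hn).2
    have hsep' := hsep m hm n hnS (Ne.symm hne)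
    have hdist : (0:ℝ) < |(m:ℝ)-(n:ℝ)| := by
      rw [abs_pos, sub_ne_zero]
      exact_mod_cast fun h => hne (by exact_mod_cast h.symm)
    have hlam : lam m - lam n ≠ 0 := by
      intro h0
      rw [h0, abs_zero] at hsep'
      nlinarith
    have hJ := integral_e_ne B hlam
    have hcc : ‖cf m * (starRingEnd ℂ) (cf n)‖ ≤ 1 := by
      rw [norm_mul, Complex.norm_conj]
      exact mul_le_one₀ (hcf m) (norm_nonneg _) (hcf n)
    calc ‖_‖ = ‖cf m * (starRingEnd ℂ) (cf n)‖
          * ‖∫ y in B..(2*B), e ((lam m - lam n) * y)‖ := norm_mul _ _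
      _ ≤ 1 * (1 / (Real.pi * |lam m - lam n|)) :=
          mul_le_mul hcc hJ (norm_nonneg _) zero_le_one
      _ = (Real.pi * |lam m - lam n|)⁻¹ := by rw [one_mul, one_div]
      _ ≤ ((Real.pi * D) * |(m:ℝ)-(n:ℝ)|)⁻¹ := by
          apply inv_anti₀ (by positivity)
          nlinarith [Real.pi_pos]
      _ = (1/(Real.pi * D)) * (1/|(m:ℝ)-(n:ℝ)|) := by
          rw [one_div, one_div, ← mul_inv]
  calc (∑ m ∈ S, ∑ n ∈ S, (cf m * (starRingEnd ℂ) (cf n))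
        * ∫ y in B..(2*B), e ((lam m - lam n) * y)).re
      ≤ ‖_‖ := Complex.re_le_norm _
    _ ≤ ∑ m ∈ S, ‖∑ n ∈ S, (cf m * (starRingEnd ℂ) (cf n))
        * ∫ y in B..(2*B), e ((lam m - lam n) * y)‖ := norm_sum_le _ _
    _ ≤ ∑ m ∈ S, (B + (1/(Real.pi * D)) * ∑ n ∈ S.erase m, 1/|(m:ℝ)-(n:ℝ)|) := by
        apply Finset.sum_le_sum
        intro m hm
        calc ‖∑ n ∈ S, (cf m * (starRingEnd ℂ) (cf n))
              * ∫ y in B..(2*B), e ((lam m - lam n) * y)‖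
            ≤ ∑ n ∈ S, ‖(cf m * (starRingEnd ℂ) (cf n))
              * ∫ y in B..(2*B), e ((lam m - lam n) * y)‖ := norm_sum_le _ _
          _ = ‖(cf m * (starRingEnd ℂ) (cf m))
              * ∫ y in B..(2*B), e ((lam m - lam m) * y)‖
              + ∑ n ∈ S.erase m, ‖(cf m * (starRingEnd ℂ) (cf n))
              * ∫ y in B..(2*B), e ((lam m - lam n) * y)‖ := (Finset.add_sum_erase _ _ hm).symm
          _ ≤ B + (1/(Real.pi * D)) * ∑ n ∈ S.erase m, 1/|(m:ℝ)-(n:ℝ)| := by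
              apply add_le_add (hdiag m hm)
              rw [Finset.mul_sum]
              exact Finset.sum_le_sum fun n hn => hoff m hm n hn
    _ = S.card * B + (1/(Real.pi * D)) * ∑ m ∈ S, ∑ n ∈ S.erase m, 1/|(m:ℝ)-(n:ℝ)| := by
        rw [Finset.sum_add_distrib, Finset.sum_const, Finset.mul_sum, nsmul_eq_mul]


theorem lemma12i (c : ℝ) (hc : 1 < c) (hcn : ∀ n : ℕ, c ≠ n) :
    ∃ η₀ > 0, ∀ η : ℝ, 0 < η → η ≤ η₀ →
    ∃ C > 0, ∃ X₀ : ℝ, ∀ X : ℝ, X₀ ≤ X →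
    ∀ cf : ℕ → ℂ, (∀ n, ‖cf n‖ ≤ 1) →
    ∀ V : ℝ → ℂ,
      ((V = fun y => ∑ n ∈ Finset.Ioc ⌊X/8⌋₊ ⌊X⌋₊, cf n * e ((n : ℝ) ^ c * y)) ∨
       (V = fun y => ∑ n ∈ Finset.Ioc ⌊X/8⌋₊ ⌊X⌋₊, cf n * e ((⌊(n : ℝ) ^ c⌋ : ℝ) * y))) →
    ∀ B : ℝ, 0 < B → B < X ^ (2 * η) →
    (∫ y in B..(2 * B), ‖V y‖ ^ 2) ≤ C * (X * B + X ^ (2 - c) * Real.log X) := by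
  have hc0 : 0 < c := by linarith
  have hc1 : 0 < c - 1 := by linarith
  refine ⟨1, one_pos, fun η hη hη1 => ?_⟩
  refine ⟨1 + (8:ℝ)^c / (Real.pi * c), by positivity, ?_⟩
  refine ⟨max 8 (max (Real.exp 1) (8 * (2/c) ^ (1/(c-1)))), fun X hX => ?_⟩
  intro cf hcf V hV B hB hBX
  have hX8 : (8:ℝ) ≤ X := le_trans (le_max_left _ _) hX
  have hX0 : (0:ℝ) < X := by linarith
  have hXe : Real.exp 1 ≤ X := le_trans (le_trans (le_max_left _ _) (le_max_right _ _)) hX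
  have hlogX : 1 ≤ Real.log X := (Real.le_log_iff_exp_le hX0).mpr hXe
  have hXq : 8 * (2/c) ^ (1/(c-1)) ≤ X :=
    le_trans (le_trans (le_max_right _ _) (le_max_right _ _)) hX
  have hK : (2:ℝ)/c ≤ (X/8) ^ (c-1) := by
    have h1 : (2/c) ^ (1/(c-1)) ≤ X/8 := by linarith
    have h2 : ((2/c) ^ (1/(c-1))) ^ (c-1) ≤ (X/8) ^ (c-1) :=
      Real.rpow_le_rpow (by positivity) h1 hc1.le
    rwa [← Real.rpow_mul (by positivity), one_div, inv_mul_cancel₀ hc1.ne', Real.rpow_one] at h2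
  have hX80 : (0:ℝ) < X/8 := by linarith
  have hKpos : (0:ℝ) < (X/8)^(c-1) := Real.rpow_pos_of_pos hX80 _
  set D : ℝ := c * (X/8)^(c-1) / 2 with hD
  have h2D : c * (X/8)^(c-1) = 2 * D := by rw [hD]; ring
  have hD1 : (1:ℝ) ≤ D := by
    rw [hD, le_div_iff₀ (by norm_num : (0:ℝ) < 2)]
    calc (1:ℝ)*2 = c * (2/c) := by field_simp
      _ ≤ c * (X/8)^(c-1) := mul_le_mul_of_nonneg_left hK hc0.le
  have hDpos : 0 < D := by linarith
  set a := ⌊X/8⌋₊ with ha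
  set b := ⌊X⌋₊ with hb
  set S := Finset.Ioc a b with hS
  have hbase : ∀ m ∈ S, ∀ n ∈ S, n < m →
      2 * D * ((m:ℝ) - n) ≤ (m:ℝ)^c - (n:ℝ)^c := by
    intro m hm n hn hlt
    have hna : a < n := (Finset.mem_Ioc.mp hn).1
    have hxn : X/8 ≤ (n:ℝ) := by
      have h1 : X/8 < (a:ℝ) + 1 := Nat.lt_floor_add_one (X/8)
      have hn1 : (a:ℝ) + 1 ≤ n := by exact_mod_cast hna
      linarith
    have := rpow_sep hc hX80 hxn (by exact_mod_cast hlt.le : (n:ℝ) ≤ m)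
    linarith [h2D ▸ this]
  obtain ⟨lam, hVl, hsep⟩ : ∃ lam : ℕ → ℝ,
      V = (fun y => ∑ n ∈ S, cf n * e (lam n * y)) ∧
      ∀ m ∈ S, ∀ n ∈ S, m ≠ n → D * |(m:ℝ)-(n:ℝ)| ≤ |lam m - lam n| := by
    rcases hV with rfl | rfl
    · refine ⟨fun n => (n:ℝ)^c, rfl, abs_sep hDpos.le (fun m hm n hn hlt => ?_)⟩
      have hb2 := hbase m hm n hn hlt
      have h1 : (0:ℝ) ≤ (m:ℝ) - n := by
        have : (n:ℝ) ≤ m := by exact_mod_cast hlt.le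
        linarith
      nlinarith [mul_nonneg hDpos.le h1]
    · refine ⟨fun n => ((⌊(n:ℝ)^c⌋ : ℤ):ℝ), rfl, abs_sep hDpos.le (fun m hm n hn hlt => ?_)⟩
      have hb2 := hbase m hm n hn hlt
      have h1 : (1:ℝ) ≤ (m:ℝ) - n := by
        have : ((n:ℝ)) + 1 ≤ m := by exact_mod_cast hlt
        linarith
      have hfm : (m:ℝ)^c - 1 < ((⌊(m:ℝ)^c⌋:ℤ):ℝ) := Int.sub_one_lt_floor _
      have hfn : ((⌊(n:ℝ)^c⌋:ℤ):ℝ) ≤ (n:ℝ)^c := Int.floor_le _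
      have h3 : (1:ℝ) ≤ D * ((m:ℝ)-n) := by nlinarith
      linarith
  rw [hVl]
  have hmain := main_L2 S cf hcf lam B hB D hDpos hsep
  have hcard : (S.card : ℝ) ≤ X := by
    rw [hS, Nat.card_Ioc]
    calc ((b - a : ℕ):ℝ) ≤ (b:ℝ) := by exact_mod_cast Nat.sub_le b a
      _ ≤ X := by rw [hb]; exact Nat.floor_le hX0.le
  have hlogN : Real.log ((b - a : ℕ):ℝ) ≤ Real.log X := by
    rcases Nat.eq_zero_or_pos (b - a) with h | h
    · rw [h]; simp; linarith
    · apply Real.log_le_log (by exact_mod_cast h)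
      calc ((b - a : ℕ):ℝ) ≤ (b:ℝ) := by exact_mod_cast Nat.sub_le b a
        _ ≤ X := by rw [hb]; exact Nat.floor_le hX0.le
  have hsum : (∑ m ∈ S, ∑ n ∈ S.erase m, 1/|(m:ℝ)-(n:ℝ)|) ≤ X * (4 * Real.log X) := by
    calc (∑ m ∈ S, ∑ n ∈ S.erase m, 1/|(m:ℝ)-(n:ℝ)|)
        ≤ ∑ m ∈ S, 2 * (1 + Real.log ((b - a : ℕ):ℝ)) :=
          Finset.sum_le_sum fun m hm => sum_inv_dist a b m hm
      _ = S.card * (2 * (1 + Real.log ((b - a : ℕ):ℝ))) := by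
          rw [Finset.sum_const, nsmul_eq_mul]
      _ ≤ X * (4 * Real.log X) := by
          apply mul_le_mul hcard (by linarith) (by positivity) hX0.le
  have hterm : (1/(Real.pi * D)) * (X * (4 * Real.log X))
      = ((8:ℝ)^c / (Real.pi * c)) * (X^(2-c) * Real.log X) := by
    have hKX : (X/8)^(c-1) = X^(c-1)/(8:ℝ)^(c-1) :=
      Real.div_rpow hX0.le (by norm_num : (0:ℝ) ≤ 8) (c-1)
    have h8 : (8:ℝ)^c = 8 * (8:ℝ)^(c-1) := by
      nth_rewrite 2 [← Real.rpow_one (8:ℝ)]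
      rw [← Real.rpow_add (by norm_num : (0:ℝ) < 8)]
      congr 1; ring
    have hXX : X^(2-c) = X * (X ^ (c-1))⁻¹ := by
      rw [← Real.rpow_neg hX0.le]
      nth_rewrite 2 [← Real.rpow_one X]
      rw [← Real.rpow_add hX0]
      congr 1; ring
    have hX1 : X^(c-1) ≠ 0 := (Real.rpow_pos_of_pos hX0 _).ne'
    have h81 : ((8:ℝ))^(c-1) ≠ 0 := (Real.rpow_pos_of_pos (by norm_num) _).ne'
    rw [hD, hKX, h8, hXX]
    field_simp
    ring
  have hfin : (S.card : ℝ) * B + (1/(Real.pi * D)) * ∑ m ∈ S, ∑ n ∈ S.erase m, 1/|(m:ℝ)-(n:ℝ)|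
      ≤ X * B + ((8:ℝ)^c / (Real.pi * c)) * (X^(2-c) * Real.log X) := by
    apply add_le_add (mul_le_mul_of_nonneg_right hcard hB.le)
    rw [← hterm]
    apply mul_le_mul_of_nonneg_left hsum (by positivity)
  refine le_trans hmain (le_trans hfin ?_)
  have hP : (0:ℝ) ≤ X^(2-c) * Real.log X := by positivity
  have hXB : (0:ℝ) ≤ X * B := by positivity
  have ht : (0:ℝ) ≤ (8:ℝ)^c / (Real.pi * c) := by positivity
  nlinarith [mul_nonneg ht hXB]
end

section
/- Let c > 1 and let s be an integer with 2 ≤ s ≤ 5. Define v(Y, x) = Σ_{1 ≤ m ≤ Y} (1/c)·m^{1/c − 1}·e(xm) for Y > 0 and real x. Then there exist constants c₀ > 0 and r₀ such that for every integer r ≥ r₀, setting X = r^{1/c}, the quantity Lₛ = ∫_{−1/2}^{1/2} ( v(X^c, x) − v((X/8)^c, x) )^s · e(−rx) dx is a real number satisfying Lₛ ≥ c₀ · r^{s/c − 1}. -/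
open Real

noncomputable def vsum (c Y x : ℝ) : ℂ :=
  ∑ m ∈ Finset.Icc 1 ⌊Y⌋₊, (((1/c) * (m : ℝ) ^ (1/c - 1) : ℝ) : ℂ) * e (x * m)



lemma e_add (a b : ℝ) : e (a + b) = e a * e b := by
  simp [e, ← Complex.exp_add]; ring_nf

lemma e_cont_s13 : Continuous e := by
  unfold e; fun_prop

lemma e_int (k : ℤ) : (∫ x in (-(1:ℝ)/2)..((1:ℝ)/2), e (k * x)) = if k = 0 then 1 else 0 := by
  split_ifs with h
  · simp [h, e]; norm_num
  · have hk : (2 * Real.pi * Complex.I * k) ≠ 0 := by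
      simp [Real.pi_ne_zero, Complex.I_ne_zero, h]
    have : (∫ x in (-(1:ℝ)/2)..((1:ℝ)/2), e (k * x))
        = ∫ x in (-(1:ℝ)/2)..((1:ℝ)/2), Complex.exp ((2 * Real.pi * Complex.I * k) * x) := by
      unfold e; congr 1; ext x; push_cast; ring_nf
    rw [this, integral_exp_mul_complex hk, div_eq_zero_iff]
    left
    rw [sub_eq_zero]
    have h1 : (2 * Real.pi * Complex.I * (k:ℂ)) * (((1:ℝ)/2 : ℝ) : ℂ)
        = (2 * Real.pi * Complex.I * (k:ℂ)) * (((-(1:ℝ))/2 : ℝ) : ℂ) + (k:ℂ) * (2 * Real.pi * Complex.I) := by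
      push_cast; ring
    rw [h1, Complex.exp_add, Complex.exp_int_mul_two_pi_mul_I]
    ring

lemma key (w : ℕ → ℝ) (S : Finset ℕ) (s r : ℕ) :
    (∫ x in (-(1:ℝ)/2)..((1:ℝ)/2), (∑ m ∈ S, ((w m : ℂ)) * e (x * m))^s * e (-(r:ℝ) * x))
    = ∑ p ∈ Fintype.piFinset (fun _ : Fin s => S),
        if (∑ i, p i) = r then ∏ i, (w (p i) : ℂ) else 0 := by
  have hpt : ∀ x : ℝ, (∑ m ∈ S, ((w m : ℂ)) * e (x * m))^s * e (-(r:ℝ) * x)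
      = ∑ p ∈ Fintype.piFinset (fun _ : Fin s => S),
          (∏ i, (w (p i) : ℂ)) * e ((((∑ i, p i : ℕ) : ℝ) - (r:ℝ)) * x) := by
    intro x
    have h1 : (∑ m ∈ S, ((w m : ℂ)) * e (x * m))^s
        = ∑ p ∈ Fintype.piFinset (fun _ : Fin s => S), ∏ i, ((w (p i) : ℂ)) * e (x * p i) := by
      have h0 : (∑ m ∈ S, ((w m : ℂ)) * e (x * m))^s
          = ∏ _i : Fin s, ∑ m ∈ S, ((w m : ℂ)) * e (x * m) := by
        simp [Finset.prod_const]
      rw [h0, Finset.prod_univ_sum]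
    rw [h1, Finset.sum_mul]
    refine Finset.sum_congr rfl fun p _ => ?_
    rw [Finset.prod_mul_distrib]
    have h2 : (∏ i, e (x * (p i : ℝ))) = e (x * ((∑ i, p i : ℕ) : ℝ)) := by
      induction (Finset.univ : Finset (Fin s)) using Finset.cons_induction with
      | empty => simp [e]
      | cons a t ha ih =>
          rw [Finset.prod_cons, Finset.sum_cons, ih]
          rw [← e_add]; congr 1; push_cast; ring
    rw [h2, mul_assoc, ← e_add]
    congr 2
    ring
  rw [intervalIntegral.integral_congr (g := fun x => ∑ p ∈ Fintype.piFinset (fun _ : Fin s => S),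
          (∏ i, (w (p i) : ℂ)) * e ((((∑ i, p i : ℕ) : ℝ) - (r:ℝ)) * x)) (fun x _ => hpt x)]
  rw [intervalIntegral.integral_finset_sum]
  · refine Finset.sum_congr rfl fun p _ => ?_
    rw [intervalIntegral.integral_const_mul]
    have : (∫ x in (-(1:ℝ)/2)..((1:ℝ)/2), e ((((∑ i, p i : ℕ) : ℝ) - (r:ℝ)) * x))
        = ∫ x in (-(1:ℝ)/2)..((1:ℝ)/2), e (((((∑ i, p i : ℕ) : ℤ) - (r:ℤ) : ℤ) : ℝ) * x) := by
      congr 1; ext x; push_cast; ring_nf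
    rw [this, e_int]
    split_ifs with h1 h2 h2
    · simp
    · omega
    · omega
    · simp
  · intro p _
    apply Continuous.intervalIntegrable
    exact continuous_const.mul (e_cont_s13.comp (by fun_prop))

lemma lowerbound (c : ℝ) (hc : 1 < c) (n : ℕ) (hn1 : 1 ≤ n) (hn4 : n ≤ 4)
    (r : ℕ) (hr : 1000000 ≤ r) (A : ℕ) (hA : A ≤ r / 8) :
    (1/200:ℝ)^n * (1/c)^(n+1) * (r:ℝ) ^ (((n+1:ℕ) : ℝ)/c - 1) ≤
    ∑ p ∈ Fintype.piFinset (fun _ : Fin (n+1) => Finset.Ioc A r),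
      (if (∑ i, p i) = r then ∏ i, (1/c * ((p i : ℕ) : ℝ) ^ (1/c - 1)) else 0) := by
  have hc0 : (0:ℝ) < c := by linarith
  set w : ℕ → ℝ := fun m => 1/c * (m : ℝ) ^ (1/c - 1) with hw
  set q := r / 8 with hq
  set t := r / 100 with ht
  set B : Finset (Fin n → ℕ) := Fintype.piFinset (fun _ : Fin n => Finset.Icc (q+1) (q+t)) with hB
  set Φ : (Fin n → ℕ) → (Fin (n+1) → ℕ) := fun g => Fin.snoc g (r - ∑ j, g j) with hΦ
  have hrpos : (0:ℝ) < r := by positivity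
  have hwnn : ∀ m, 0 ≤ w m := fun m => by positivity
  have hconstnn : (0:ℝ) ≤ 1/c * (r:ℝ) ^ (1/c - 1) := by positivity
  have hwge : ∀ m : ℕ, 1 ≤ m → m ≤ r → 1/c * (r:ℝ) ^ (1/c - 1) ≤ w m := by
    intro m h1 h2
    apply mul_le_mul_of_nonneg_left _ (by positivity)
    apply Real.rpow_le_rpow_of_nonpos (by exact_mod_cast h1)
      (by exact_mod_cast h2)
    have : 1/c < 1 := by rw [div_lt_one hc0]; linarith
    linarith
  -- facts about g ∈ B
  have hgfacts : ∀ g ∈ B, (∀ j, q + 1 ≤ g j ∧ g j ≤ q + t) ∧ ∑ j, g j ≤ n * (q + t) := by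
    intro g hg
    rw [hB, Fintype.mem_piFinset] at hg
    have h1 : ∀ j, q + 1 ≤ g j ∧ g j ≤ q + t := fun j => Finset.mem_Icc.mp (hg j)
    refine ⟨h1, ?_⟩
    calc ∑ j, g j ≤ ∑ _j : Fin n, (q + t) := Finset.sum_le_sum fun j _ => (h1 j).2
    _ = n * (q + t) := by simp [Finset.sum_const, Fintype.card_fin, smul_eq_mul]
  have harith : n * (q + t) + q + 1 ≤ r := by
    have : n * (q + t) ≤ 4 * (q + t) := Nat.mul_le_mul_right _ hn4
    omega
  -- Φ g coordinates
  have hcoord : ∀ g ∈ B, (∀ i, A + 1 ≤ Φ g i ∧ Φ g i ≤ r) ∧ (∑ i, Φ g i = r) := by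
    intro g hg
    obtain ⟨h1, h2⟩ := hgfacts g hg
    have hlast : Φ g (Fin.last n) = r - ∑ j, g j := by simp [hΦ]
    have hcast : ∀ j : Fin n, Φ g j.castSucc = g j := by intro j; simp [hΦ]
    have hsum_le : ∑ j, g j ≤ r := by
      have := harith; omega
    constructor
    · intro i
      rcases Fin.eq_castSucc_or_eq_last i with ⟨j, rfl⟩ | rfl
      · have hj := h1 j
        rw [hcast]
        omega
      · rw [hlast]
        have := harith
        have := h2
        omega
    · rw [Fin.sum_univ_castSucc]
      simp only [hcast, hlast]
      omega
  -- injectivity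
  have hinj : ∀ g ∈ B, ∀ g' ∈ B, Φ g = Φ g' → g = g' := by
    intro g _ g' _ h
    funext j
    have := congrFun h j.castSucc
    simpa [hΦ] using this
  -- image subset
  have hsub : B.image Φ ⊆ Fintype.piFinset (fun _ : Fin (n+1) => Finset.Ioc A r) := by
    intro p hp
    rw [Finset.mem_image] at hp
    obtain ⟨g, hg, rfl⟩ := hp
    rw [Fintype.mem_piFinset]
    intro i
    rw [Finset.mem_Ioc]
    have := (hcoord g hg).1 i
    omega
  -- sum bound
  set F : (Fin (n+1) → ℕ) → ℝ := fun p => if (∑ i, p i) = r then ∏ i, w (p i) else 0 with hF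
  have hFnn : ∀ p, 0 ≤ F p := by
    intro p; rw [hF]; dsimp only; split_ifs
    · exact Finset.prod_nonneg fun i _ => hwnn _
    · exact le_rfl
  -- step 1: restrict to image
  have step1 : ∑ g ∈ B, F (Φ g) ≤
      ∑ p ∈ Fintype.piFinset (fun _ : Fin (n+1) => Finset.Ioc A r), F p := by
    rw [← Finset.sum_image hinj]
    exact Finset.sum_le_sum_of_subset_of_nonneg hsub (fun p _ _ => hFnn p)
  -- step 2: each term in image is at least const^(n+1)
  have step2 : ∀ g ∈ B, (1/c * (r:ℝ) ^ (1/c - 1))^(n+1) ≤ F (Φ g) := by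
    intro g hg
    obtain ⟨h1, h2⟩ := hcoord g hg
    rw [hF]
    dsimp only
    rw [if_pos h2]
    calc (1/c * (r:ℝ) ^ (1/c - 1))^(n+1)
        = ∏ _i : Fin (n+1), (1/c * (r:ℝ) ^ (1/c - 1)) := by
          simp [Finset.prod_const, Fintype.card_fin]
    _ ≤ ∏ i, w (Φ g i) := by
          apply Finset.prod_le_prod (fun i _ => hconstnn)
          intro i _
          exact hwge _ (by have := h1 i; omega) (h1 i).2
  -- step 3: card of B
  have hcard : B.card = t ^ n := by
    rw [hB, Fintype.card_piFinset]
    simp [Nat.card_Icc]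
  have step3 : (t:ℝ)^n * (1/c * (r:ℝ) ^ (1/c - 1))^(n+1) ≤ ∑ g ∈ B, F (Φ g) := by
    calc (t:ℝ)^n * (1/c * (r:ℝ) ^ (1/c - 1))^(n+1)
        = B.card * (1/c * (r:ℝ) ^ (1/c - 1))^(n+1) := by rw [hcard]; push_cast; ring
    _ = ∑ _g ∈ B, (1/c * (r:ℝ) ^ (1/c - 1))^(n+1) := by rw [Finset.sum_const, nsmul_eq_mul]
    _ ≤ ∑ g ∈ B, F (Φ g) := Finset.sum_le_sum step2
  -- step 4: numeric lower bound for t and rpow algebra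
  have htge : (r:ℝ)/200 ≤ (t:ℝ) := by
    have h1 : r ≤ 200 * t := by omega
    have h2 : (r:ℝ) ≤ 200 * (t:ℝ) := by exact_mod_cast h1
    linarith
  have hre : (r:ℝ) ^ (((n+1:ℕ):ℝ)/c - 1)
      = (r:ℝ)^(n:ℕ) * ((r:ℝ)^(1/c-1))^(n+1:ℕ) := by
    rw [← Real.rpow_natCast (r:ℝ) n, ← Real.rpow_natCast ((r:ℝ)^(1/c-1)) (n+1),
      ← Real.rpow_mul hrpos.le, ← Real.rpow_add hrpos]
    congr 1
    push_cast
    field_simp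
    ring
  have halg : (1/200:ℝ)^n * (1/c)^(n+1) * (r:ℝ) ^ (((n+1:ℕ):ℝ)/c - 1)
      ≤ (t:ℝ)^n * (1/c * (r:ℝ) ^ (1/c - 1))^(n+1) := by
    have h1 : (1/200:ℝ)^n * (1/c)^(n+1) * (r:ℝ) ^ (((n+1:ℕ):ℝ)/c - 1)
        = ((r:ℝ)/200)^n * (1/c * (r:ℝ) ^ (1/c - 1))^(n+1) := by
      rw [hre, div_pow, mul_pow, div_pow, div_pow]
      ring
    rw [h1]
    apply mul_le_mul_of_nonneg_right _ (by positivity)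
    exact pow_le_pow_left₀ (by positivity) htge n
  calc (1/200:ℝ)^n * (1/c)^(n+1) * (r:ℝ) ^ (((n+1:ℕ):ℝ)/c - 1)
      ≤ (t:ℝ)^n * (1/c * (r:ℝ) ^ (1/c - 1))^(n+1) := halg
  _ ≤ ∑ g ∈ B, F (Φ g) := step3
  _ ≤ ∑ p ∈ Fintype.piFinset (fun _ : Fin (n+1) => Finset.Ioc A r), F p := step1


theorem lemma20 (c : ℝ) (hc : 1 < c) (s : ℕ) (hs2 : 2 ≤ s) (hs5 : s ≤ 5) :
    ∃ c₀ > 0, ∃ r₀ : ℕ, ∀ r : ℕ, r₀ ≤ r →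
    (∫ x in (-(1:ℝ)/2)..((1:ℝ)/2),
        (vsum c (((r : ℝ) ^ (1/c)) ^ c) x - vsum c ((((r : ℝ) ^ (1/c)) / 8) ^ c) x) ^ s
          * e (-(r : ℝ) * x)).im = 0 ∧
    c₀ * (r : ℝ) ^ ((s : ℝ)/c - 1) ≤
      (∫ x in (-(1:ℝ)/2)..((1:ℝ)/2),
        (vsum c (((r : ℝ) ^ (1/c)) ^ c) x - vsum c ((((r : ℝ) ^ (1/c)) / 8) ^ c) x) ^ s
          * e (-(r : ℝ) * x)).re := by
  have hc0 : (0:ℝ) < c := by linarith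
  have hcne : c ≠ 0 := ne_of_gt hc0
  obtain ⟨n, rfl⟩ : ∃ n, s = n + 1 := ⟨s - 1, by omega⟩
  have hn1 : 1 ≤ n := by omega
  have hn4 : n ≤ 4 := by omega
  refine ⟨(1/200:ℝ)^n * (1/c)^(n+1), by positivity, 1000000, ?_⟩
  intro r hr
  set w : ℕ → ℝ := fun m => 1/c * (m : ℝ) ^ (1/c - 1) with hw
  have hrR : (0:ℝ) ≤ (r:ℝ) := Nat.cast_nonneg r
  have hX1 : ((r:ℝ) ^ (1/c)) ^ c = (r:ℝ) := by
    rw [← Real.rpow_mul hrR, one_div_mul_cancel hcne, Real.rpow_one]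
  have hX2 : (((r:ℝ) ^ (1/c)) / 8) ^ c = (r:ℝ) / (8:ℝ)^c := by
    rw [Real.div_rpow (Real.rpow_nonneg hrR _) (by norm_num), hX1]
  set A := ⌊(r:ℝ)/(8:ℝ)^c⌋₊ with hAdef
  have h8c : (8:ℝ) ≤ (8:ℝ)^c := by
    calc (8:ℝ) = (8:ℝ)^(1:ℝ) := (Real.rpow_one _).symm
    _ ≤ (8:ℝ)^c := Real.rpow_le_rpow_of_exponent_le (by norm_num) hc.le
  have hAq : A ≤ r / 8 := by
    have hle : (r:ℝ)/(8:ℝ)^c ≤ (r:ℝ)/((8:ℕ):ℝ) := by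
      push_cast
      apply div_le_div_of_nonneg_left hrR (by norm_num) h8c
    calc A ≤ ⌊(r:ℝ)/((8:ℕ):ℝ)⌋₊ := Nat.floor_mono hle
    _ = r / 8 := by rw [Nat.floor_div_natCast, Nat.floor_natCast]
  have hAr : A ≤ r := le_trans hAq (Nat.div_le_self r 8)
  have hfloor1 : ⌊((r:ℝ) ^ (1/c)) ^ c⌋₊ = r := by rw [hX1, Nat.floor_natCast]
  have hfloor2 : ⌊(((r:ℝ) ^ (1/c)) / 8) ^ c⌋₊ = A := by rw [hX2]
  have hIcc : ∀ N : ℕ, Finset.Icc 1 N = Finset.Ioc 0 N := by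
    intro N; ext m; simp [Nat.lt_iff_add_one_le]
  have hdiff : ∀ x : ℝ, vsum c (((r:ℝ) ^ (1/c)) ^ c) x - vsum c ((((r:ℝ) ^ (1/c)) / 8) ^ c) x
      = ∑ m ∈ Finset.Ioc A r, ((w m : ℝ) : ℂ) * e (x * m) := by
    intro x
    unfold vsum
    rw [hfloor1, hfloor2, hIcc, hIcc,
      ← Finset.sum_Ioc_consecutive (fun m : ℕ => ((w m : ℝ) : ℂ) * e (x * m)) (Nat.zero_le A) hAr]
    ring
  have hInt : (∫ x in (-(1:ℝ)/2)..((1:ℝ)/2),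
        (vsum c (((r : ℝ) ^ (1/c)) ^ c) x - vsum c ((((r : ℝ) ^ (1/c)) / 8) ^ c) x) ^ (n+1)
          * e (-(r : ℝ) * x))
      = (((∑ p ∈ Fintype.piFinset (fun _ : Fin (n+1) => Finset.Ioc A r),
          if (∑ i, p i) = r then ∏ i, w (p i) else 0 : ℝ)) : ℂ) := by
    rw [intervalIntegral.integral_congr
      (g := fun x => (∑ m ∈ Finset.Ioc A r, ((w m : ℝ) : ℂ) * e (x * m)) ^ (n+1) * e (-(r:ℝ) * x))
      (fun x _ => by rw [hdiff x])]
    rw [key w (Finset.Ioc A r) (n+1) r]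
    rw [Complex.ofReal_sum]
    refine Finset.sum_congr rfl fun p _ => ?_
    split_ifs
    · rw [Complex.ofReal_prod]
    · simp
  rw [hInt]
  constructor
  · exact Complex.ofReal_im _
  · rw [Complex.ofReal_re]
    exact lowerbound c hc n hn1 hn4 r hr A hAq
end

section
/- Let c > 1, let η > 0, and let s be an integer with 2 ≤ s ≤ 5. Then there exist constants c₀ > 0 and R₀ such that for every R ≥ R₀ the following holds, with X = R^{1/c}: for every continuous function φ : ℝ → [0,1] with φ(y) = 1 whenever |y| ≤ (4/5)·R^{−η}, the quantity Hₛ = ∫_{X/8}^{X} ⋯ ∫_{X/8}^{X} φ(t₁^c + ⋯ + tₛ^c − R) dt₁ ⋯ dtₛ satisfies Hₛ ≥ c₀ · X^{s − c − cη}. -/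
open Real MeasureTheory

-- MVT-type bound via Bernoulli
lemma rpow_mvt {a b c : ℝ} (ha : 0 ≤ a) (hab : a ≤ b) (hc : 1 ≤ c) :
    b ^ c - a ^ c ≤ c * b ^ (c - 1) * (b - a) := by
  rcases eq_or_lt_of_le (ha.trans hab) with hb | hb
  · have hb0 : b = 0 := hb.symm
    have ha0 : a = 0 := le_antisymm (hab.trans_eq hb0) ha
    simp [ha0, hb0, Real.zero_rpow (by linarith : c ≠ 0)]
  · set z : ℝ := a / b - 1 with hz_def
    have hz : -1 ≤ z := by
      have : 0 ≤ a / b := div_nonneg ha hb.le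
      simp [hz_def]; linarith
    have key := one_add_mul_self_le_rpow_one_add hz hc
    have h1z : 1 + z = a / b := by simp [hz_def]
    have hdiv : (1 + z) ^ c = a ^ c / b ^ c := by
      rw [h1z, Real.div_rpow ha hb.le]
    have hbc : (0:ℝ) < b ^ c := Real.rpow_pos_of_pos hb c
    have hb1 : b ^ c = b ^ (c - 1) * b := by
      rw [← Real.rpow_add_one hb.ne' (c - 1)]; ring_nf
    have key2 : (1 + c * z) * b ^ c ≤ a ^ c := by
      calc (1 + c * z) * b ^ c ≤ (1 + z) ^ c * b ^ c := by
            exact mul_le_mul_of_nonneg_right key hbc.le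
        _ = a ^ c := by rw [hdiv]; field_simp
    have hzb : z * b ^ c = a * b ^ (c - 1) - b ^ c := by
      rw [hz_def, hb1]; field_simp
    nlinarith [key2, hzb]

lemma volume_graph_set {m : ℕ} (h : (Fin m → ℝ) → ℝ) (hh : Measurable h)
    (δ : ℝ) (hδ : 0 ≤ δ) (a b : ℝ) :
    volume {t : Fin (m+1) → ℝ | (∀ j : Fin m, Fin.tail t j ∈ Set.Icc a b) ∧
        t 0 ∈ Set.Icc (h (Fin.tail t)) (h (Fin.tail t) + δ)} =
      ENNReal.ofReal δ * (ENNReal.ofReal (b - a)) ^ m := by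
  set A : Set (ℝ × (Fin m → ℝ)) :=
    {p | (∀ j, p.2 j ∈ Set.Icc a b) ∧ p.1 ∈ Set.Icc (h p.2) (h p.2 + δ)} with hA_def
  have hA : MeasurableSet A := by
    have h1 : MeasurableSet {p : ℝ × (Fin m → ℝ) | ∀ j, p.2 j ∈ Set.Icc a b} := by
      rw [Set.setOf_forall]
      exact MeasurableSet.iInter fun j =>
        (measurableSet_Icc.preimage (by fun_prop))
    have h2 : MeasurableSet {p : ℝ × (Fin m → ℝ) | h p.2 ≤ p.1} :=
      measurableSet_le (hh.comp measurable_snd) measurable_fst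
    have h3 : MeasurableSet {p : ℝ × (Fin m → ℝ) | p.1 ≤ h p.2 + δ} :=
      measurableSet_le measurable_fst ((hh.comp measurable_snd).add_const δ)
    have : A = {p : ℝ × (Fin m → ℝ) | ∀ j, p.2 j ∈ Set.Icc a b} ∩
        ({p | h p.2 ≤ p.1} ∩ {p | p.1 ≤ h p.2 + δ}) := by
      ext p; simp [hA_def, Set.mem_Icc, and_assoc]
    rw [this]; exact h1.inter (h2.inter h3)
  set e := MeasurableEquiv.piFinSuccAbove (fun _ : Fin (m+1) => ℝ) 0 with he_def
  have hSA : {t : Fin (m+1) → ℝ | (∀ j : Fin m, Fin.tail t j ∈ Set.Icc a b) ∧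
      t 0 ∈ Set.Icc (h (Fin.tail t)) (h (Fin.tail t) + δ)} = e ⁻¹' A := by
    ext t
    have htail : (fun j => t ((0:Fin (m+1)).succAbove j)) = Fin.tail t := by
      funext j; simp [Fin.succAbove, Fin.tail]
    simp [hA_def, he_def, MeasurableEquiv.piFinSuccAbove_apply, htail]
  have mp := measurePreserving_piFinSuccAbove (fun _ : Fin (m+1) => (volume : Measure ℝ)) 0
  rw [hSA, volume_pi, mp.measure_preimage hA.nullMeasurableSet]
  rw [Measure.prod_apply_symm hA]
  have hslice : (fun y : Fin m → ℝ => volume ((fun x => (x, y)) ⁻¹' A)) =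
      (Set.univ.pi fun _ : Fin m => Set.Icc a b).indicator
        (fun _ => ENNReal.ofReal δ) := by
    funext y
    by_cases hy : ∀ j, y j ∈ Set.Icc a b
    · have : ((fun x => (x, y)) ⁻¹' A) = Set.Icc (h y) (h y + δ) := by
        ext x
        simp only [hA_def, Set.mem_preimage, Set.mem_setOf_eq]
        exact ⟨fun hp => hp.2, fun hp => ⟨hy, hp⟩⟩
      rw [this, Real.volume_Icc, Set.indicator_of_mem (Set.mem_univ_pi.mpr hy),
        add_sub_cancel_left]
    · have : ((fun x => (x, y)) ⁻¹' A) = ∅ := by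
        ext x
        simp only [hA_def, Set.mem_preimage, Set.mem_setOf_eq, Set.mem_empty_iff_false,
          iff_false, not_and]
        exact fun hp => absurd hp hy
      rw [this, Set.indicator_of_notMem (fun hmem => hy fun j => Set.mem_univ_pi.mp hmem j)]
      simp
  rw [hslice]
  rw [lintegral_indicator_const (MeasurableSet.univ_pi fun _ => measurableSet_Icc), Measure.pi_pi]
  simp [Real.volume_Icc, Finset.prod_const]

set_option maxHeartbeats 2000000 in
theorem lemma21 (c : ℝ) (hc : 1 < c) (η : ℝ) (hη : 0 < η)
    (s : ℕ) (hs2 : 2 ≤ s) (hs5 : s ≤ 5) :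
    ∃ c₀ > 0, ∃ R₀ : ℝ, ∀ R : ℝ, R₀ ≤ R →
    ∀ φ : ℝ → ℝ, Continuous φ → (∀ y, φ y ∈ Set.Icc (0:ℝ) 1) →
      (∀ y : ℝ, |y| ≤ 4/5 * R ^ (-η) → φ y = 1) →
    c₀ * (R ^ (1/c)) ^ ((s : ℝ) - c - c * η) ≤
      ∫ t in Set.univ.pi (fun _ : Fin s => Set.Icc (R ^ (1/c) / 8) (R ^ (1/c))),
        φ ((∑ j, (t j) ^ c) - R) := by
  obtain ⟨m, rfl⟩ : ∃ m, s = m + 1 := ⟨s - 1, by omega⟩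
  have hm1 : 1 ≤ m := by omega
  have hm4 : m ≤ 4 := by omega
  have hc0 : (0:ℝ) < c := by linarith
  have hcc : c ≠ 0 := hc0.ne'
  have hcη : (0:ℝ) < c + c * η := by nlinarith
  set B : ℝ := 4/5 * 2 ^ (c-1) * 8 ^ c with hB_def
  have h2c : (0:ℝ) < (2:ℝ) ^ (c-1) := Real.rpow_pos_of_pos (by norm_num) _
  have h8c : (0:ℝ) < (8:ℝ) ^ c := Real.rpow_pos_of_pos (by norm_num) _
  have hB0 : 0 < B := by positivity
  set X₀ : ℝ := max 1 (B ^ (1/(c + c*η))) with hX₀_def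
  have hX₀1 : (1:ℝ) ≤ X₀ := le_max_left _ _
  refine ⟨4/(5*c) * (1/56)^m, by positivity, X₀ ^ c, ?_⟩
  intro R hR φ hφc hφ01 hφ1
  have hR0 : (0:ℝ) < R := lt_of_lt_of_le (Real.rpow_pos_of_pos (by linarith) c) hR
  set X : ℝ := R ^ (1/c) with hX_def
  have hX0 : 0 < X := Real.rpow_pos_of_pos hR0 _
  have hXX₀ : X₀ ≤ X := by
    have h1 : (X₀ ^ c) ^ (1/c) ≤ R ^ (1/c) :=
      Real.rpow_le_rpow (by positivity) hR (by positivity)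
    rwa [← Real.rpow_mul (by linarith) c (1/c), mul_one_div, div_self hcc,
      Real.rpow_one] at h1
  have hX1 : 1 ≤ X := hX₀1.trans hXX₀
  have hXc : X ^ c = R := by
    rw [hX_def, ← Real.rpow_mul hR0.le, one_div, inv_mul_cancel₀ hcc, Real.rpow_one]
  have hXB : B ≤ X ^ (c + c*η) := by
    have h1 : B ^ (1/(c+c*η)) ≤ X := le_trans (le_max_right _ _) hXX₀
    have h2 : (B ^ (1/(c+c*η))) ^ (c+c*η) ≤ X ^ (c+c*η) :=
      Real.rpow_le_rpow (by positivity) h1 hcη.le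
    rwa [← Real.rpow_mul hB0.le, one_div, inv_mul_cancel₀ hcη.ne', Real.rpow_one] at h2
  set ε : ℝ := 4/5 * X ^ (-(c*η)) with hε_def
  set δ : ℝ := 4/(5*c) * X ^ (1 - c - c*η) with hδ_def
  have hδ0 : 0 ≤ δ := by positivity
  have hε0 : 0 < ε := by positivity
  have hδX : δ ≤ X := by
    have hT : X ^ (1 - c - c*η) ≤ X ^ (1:ℝ) :=
      Real.rpow_le_rpow_of_exponent_le hX1 (by nlinarith)
    rw [Real.rpow_one] at hT
    have hT0 : (0:ℝ) ≤ X ^ (1 - c - c*η) := Real.rpow_nonneg hX0.le _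
    have h45 : 4/(5*c) ≤ 1 := by rw [div_le_one (by linarith)]; linarith
    nlinarith
  have hεδ : c * X ^ (c-1) * δ = ε := by
    have h1 : X ^ (c-1) * X ^ (1 - c - c*η) = X ^ (-(c*η)) := by
      rw [← Real.rpow_add hX0]; ring_nf
    rw [hδ_def, hε_def, ← h1]; field_simp
  have hεR : ε = 4/5 * R ^ (-η) := by
    rw [hε_def]; congr 1
    rw [hX_def, ← Real.rpow_mul hR0.le]; congr 1; field_simp
  have hC1 : 2 ^ (c-1) * ε ≤ (X/8)^c := by
    have key : B * X ^ (-(c*η)) ≤ X ^ c := by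
      have := mul_le_mul_of_nonneg_right hXB (Real.rpow_nonneg hX0.le (-(c*η)))
      rwa [← Real.rpow_add hX0, show c + c*η + -(c*η) = c by ring] at this
    rw [Real.div_rpow hX0.le (by norm_num), le_div_iff₀ h8c]
    calc 2 ^ (c-1) * ε * 8 ^ c = B * X ^ (-(c*η)) := by rw [hB_def, hε_def]; ring
      _ ≤ X ^ c := key
  clear_value B X₀ X ε δ
  -- the shifted box construction
  set K : Set ℝ := Set.Icc (X/8) (X/7) with hK_def
  set h : (Fin m → ℝ) → ℝ := fun y => (R - ∑ j, y j ^ c) ^ (1/c) with hh_def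
  have hhm : Measurable h := by
    apply (Real.continuous_rpow_const (by positivity : (0:ℝ) ≤ 1/c)).measurable.comp
    exact measurable_const.sub
      (Finset.measurable_sum _ fun j _ =>
        (Real.continuous_rpow_const hc0.le).measurable.comp (measurable_pi_apply j))
  -- facts for y in the box K^m
  have hyfacts : ∀ y : Fin m → ℝ, (∀ j, y j ∈ K) →
      (X/8)^c ≤ ∑ j, y j ^ c ∧ ∑ j, y j ^ c ≤ 4/7 * X^c := by
    intro y hy
    have hterm_ub : ∀ j, y j ^ c ≤ (X/7) ^ c := fun j =>
      Real.rpow_le_rpow (le_trans (by positivity) (hy j).1) (hy j).2 hc0.le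
    have hterm_lb : ∀ j, (X/8) ^ c ≤ y j ^ c := fun j =>
      Real.rpow_le_rpow (by positivity) (hy j).1 hc0.le
    have hX7 : (X/7 : ℝ) ^ c ≤ X ^ c / 7 := by
      rw [Real.div_rpow hX0.le (by norm_num)]
      apply div_le_div_of_nonneg_left (Real.rpow_nonneg hX0.le c) (by norm_num)
      calc (7:ℝ) = 7 ^ (1:ℝ) := (Real.rpow_one 7).symm
        _ ≤ 7 ^ c := Real.rpow_le_rpow_of_exponent_le (by norm_num) hc.le
    constructor
    · calc (X/8)^c = (1:ℕ) • (X/8)^c := by simp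
        _ ≤ (m:ℕ) • (X/8)^c := by
            apply nsmul_le_nsmul_left (Real.rpow_nonneg (by positivity) c) hm1
        _ = ∑ _j : Fin m, (X/8)^c := by simp [Finset.sum_const]
        _ ≤ ∑ j, y j ^ c := Finset.sum_le_sum fun j _ => hterm_lb j
    · calc ∑ j, y j ^ c ≤ ∑ _j : Fin m, (X/7)^c := Finset.sum_le_sum fun j _ => hterm_ub j
        _ = (m:ℝ) * (X/7)^c := by simp [Finset.sum_const, mul_comm]
        _ ≤ 4 * (X ^ c / 7) := by
            have : (m:ℝ) ≤ 4 := by exact_mod_cast hm4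
            have h70 : (0:ℝ) ≤ (X/7)^c := Real.rpow_nonneg (by positivity) c
            nlinarith
        _ = 4/7 * X^c := by ring
  have hhfacts : ∀ y : Fin m → ℝ, (∀ j, y j ∈ K) →
      h y ^ c = R - ∑ j, y j ^ c ∧ 3/7 * X ≤ h y ∧ h y + δ ≤ X := by
    intro y hy
    obtain ⟨hSl, hSu⟩ := hyfacts y hy
    have hXcpos : (0:ℝ) < X ^ c := Real.rpow_pos_of_pos hX0 c
    have hRS : 3/7 * X^c ≤ R - ∑ j, y j ^ c := by rw [← hXc]; linarith
    have hRS0 : (0:ℝ) < R - ∑ j, y j ^ c := by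
      have : (0:ℝ) < 3/7 * X^c := by positivity
      linarith
    have hhc : h y ^ c = R - ∑ j, y j ^ c := by
      rw [hh_def, ← Real.rpow_mul hRS0.le, one_div, inv_mul_cancel₀ hcc, Real.rpow_one]
    refine ⟨hhc, ?_, ?_⟩
    · have h1 : ((3/7) * X^c) ^ (1/c) ≤ h y := by
        rw [hh_def]; exact Real.rpow_le_rpow (by positivity) hRS (by positivity)
      have h2 : ((3/7) * X^c) ^ (1/c) = (3/7 : ℝ)^(1/c) * X := by
        rw [Real.mul_rpow (by norm_num) hXcpos.le, ← Real.rpow_mul hX0.le,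
          mul_one_div, div_self hcc, Real.rpow_one]
      have h3 : (3/7 : ℝ) ≤ (3/7 : ℝ) ^ (1/c) := by
        calc (3/7:ℝ) = (3/7) ^ (1:ℝ) := (Real.rpow_one _).symm
          _ ≤ (3/7) ^ (1/c) := by
            apply Real.rpow_le_rpow_of_exponent_ge (by norm_num) (by norm_num)
            rw [div_le_one hc0]; linarith
      have h4 : (3/7:ℝ) * X ≤ (3/7:ℝ)^(1/c) * X :=
        mul_le_mul_of_nonneg_right h3 hX0.le
      rw [h2] at h1
      linarith
    · -- h y + δ ≤ X
      have hh0 : 0 ≤ h y := Real.rpow_nonneg hRS0.le _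
      have hX8c : (0:ℝ) ≤ (X/8)^c := Real.rpow_nonneg (by positivity) c
      have hhX : h y ≤ X := by
        rw [hh_def, hX_def]
        exact Real.rpow_le_rpow hRS0.le (by linarith) (by positivity)
      have h2X : h y + δ ≤ 2*X := by linarith
      have hmvt := rpow_mvt hh0 (by linarith : h y ≤ h y + δ) hc.le
      have hb1 : (h y + δ) ^ (c-1) ≤ (2*X) ^ (c-1) :=
        Real.rpow_le_rpow (by linarith) h2X (by linarith)
      have hb2 : ((2:ℝ)*X) ^ (c-1) = 2^(c-1) * X^(c-1) :=
        Real.mul_rpow (by norm_num) hX0.le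
      have hkey : (h y + δ) ^ c ≤ h y ^ c + 2^(c-1) * ε := by
        have hXc1 : (0:ℝ) ≤ X ^ (c-1) := Real.rpow_nonneg hX0.le _
        have hb3 : c * (h y + δ) ^ (c-1) * δ ≤ 2^(c-1) * (c * X^(c-1) * δ) := by
          rw [hb2] at hb1
          nlinarith [mul_le_mul_of_nonneg_left hb1 (mul_nonneg hc0.le hδ0)]
        rw [hεδ] at hb3
        linarith [hmvt, hb3]
      have hXle : (h y + δ) ^ c ≤ X ^ c := by
        rw [hhc] at hkey
        have hSl' := hSl
        rw [hXc]; linarith [hC1]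
      by_contra hcon
      push_neg at hcon
      exact absurd (Real.rpow_lt_rpow hX0.le hcon hc0) (not_lt.mpr hXle)
  -- the good set S
  set S : Set (Fin (m+1) → ℝ) := {t | (∀ j : Fin m, Fin.tail t j ∈ K) ∧
      t 0 ∈ Set.Icc (h (Fin.tail t)) (h (Fin.tail t) + δ)} with hS_def
  have hvolS : volume S = ENNReal.ofReal δ * (ENNReal.ofReal (X/7 - X/8)) ^ m := by
    rw [hS_def, hK_def]; exact volume_graph_set h hhm δ hδ0 (X/8) (X/7)
  have htail_m : Measurable fun t : Fin (m+1) → ℝ => Fin.tail t :=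
    measurable_pi_lambda _ fun i => measurable_pi_apply i.succ
  have hSmeas : MeasurableSet S := by
    have h1 : MeasurableSet {t : Fin (m+1) → ℝ | ∀ j, Fin.tail t j ∈ K} := by
      rw [Set.setOf_forall]
      exact MeasurableSet.iInter fun j =>
        measurableSet_Icc.preimage ((measurable_pi_apply j).comp htail_m)
    have h2 : MeasurableSet {t : Fin (m+1) → ℝ | h (Fin.tail t) ≤ t 0} :=
      measurableSet_le (hhm.comp htail_m) (measurable_pi_apply 0)
    have h3 : MeasurableSet {t : Fin (m+1) → ℝ | t 0 ≤ h (Fin.tail t) + δ} :=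
      measurableSet_le (measurable_pi_apply 0) ((hhm.comp htail_m).add_const δ)
    have : S = {t : Fin (m+1) → ℝ | ∀ j, Fin.tail t j ∈ K} ∩
        ({t | h (Fin.tail t) ≤ t 0} ∩ {t | t 0 ≤ h (Fin.tail t) + δ}) := by
      ext t; simp [hS_def, Set.mem_Icc, and_assoc]
    rw [this]; exact h1.inter (h2.inter h3)
  -- the cube
  set C : Set (Fin (m+1) → ℝ) := Set.univ.pi fun _ => Set.Icc (X/8) X with hC_def
  have hCmeas : MeasurableSet C := MeasurableSet.univ_pi fun _ => measurableSet_Icc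
  have hCfin : volume C < ⊤ :=
    (isCompact_univ_pi fun _ => isCompact_Icc).measure_lt_top
  set g : (Fin (m+1) → ℝ) → ℝ := fun t => φ ((∑ j, t j ^ c) - R) with hg_def
  have hgmeas : Measurable g := by
    apply hφc.measurable.comp
    exact (Finset.measurable_sum _ fun j _ =>
      (Real.continuous_rpow_const hc0.le).measurable.comp (measurable_pi_apply j)).sub
      measurable_const
  have hgnn : ∀ t, 0 ≤ g t := fun t => (hφ01 _).1
  -- pointwise: S ⊆ C and g = 1 on S
  have hSsub : ∀ t, t ∈ S → t ∈ C ∧ g t = 1 := by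
    intro t ht
    obtain ⟨hy, ht0⟩ := ht
    obtain ⟨hhc, hly, huy⟩ := hhfacts (Fin.tail t) hy
    have ht0l := ht0.1
    have ht0u := ht0.2
    have ht0X : t 0 ≤ X := le_trans ht0u huy
    have hh0 : 0 ≤ h (Fin.tail t) := le_trans (by positivity) hly
    have htC : t ∈ C := by
      rw [hC_def, Set.mem_univ_pi]
      intro j
      refine Fin.cases ?_ ?_ j
      · exact ⟨le_trans (by linarith) ht0l, ht0X⟩
      · intro i
        have := hy i
        rw [hK_def, Set.mem_Icc] at this
        exact ⟨this.1, le_trans this.2 (by linarith)⟩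
    refine ⟨htC, ?_⟩
    have hsum : ∑ j, t j ^ c = t 0 ^ c + ∑ i, Fin.tail t i ^ c := by
      rw [Fin.sum_univ_succ]; rfl
    have hdiff : (∑ j, t j ^ c) - R = t 0 ^ c - h (Fin.tail t) ^ c := by
      rw [hsum, hhc]; ring
    have hlb : 0 ≤ t 0 ^ c - h (Fin.tail t) ^ c :=
      sub_nonneg.mpr (Real.rpow_le_rpow hh0 ht0l hc0.le)
    have hub : t 0 ^ c - h (Fin.tail t) ^ c ≤ ε := by
      have hmvt := rpow_mvt hh0 ht0l hc.le
      have hb1 : t 0 ^ (c-1) ≤ X ^ (c-1) :=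
        Real.rpow_le_rpow (le_trans hh0 ht0l) ht0X (by linarith)
      have hd : t 0 - h (Fin.tail t) ≤ δ := by linarith
      have h1 : c * t 0 ^ (c-1) * (t 0 - h (Fin.tail t)) ≤ c * X ^ (c-1) * δ := by
        have hnn : 0 ≤ t 0 - h (Fin.tail t) := by linarith
        have hstep := mul_le_mul hb1 hd hnn (Real.rpow_nonneg hX0.le (c-1))
        have := mul_le_mul_of_nonneg_left hstep hc0.le
        nlinarith [this]
      rw [hεδ] at h1
      linarith
    rw [hg_def]
    apply hφ1
    rw [← hεR, hdiff, abs_le]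
    constructor <;> linarith
  -- integrability of the cut-off integrand
  have hgint : IntegrableOn g C := by
    apply Integrable.mono' (integrableOn_const (C := (1:ℝ)) hCfin.ne)
      hgmeas.aestronglyMeasurable.restrict
    refine ae_of_all _ fun t => ?_
    rw [Real.norm_eq_abs, abs_le]
    exact ⟨by linarith [(hφ01 ((∑ j, t j ^ c) - R)).1],
      (hφ01 ((∑ j, t j ^ c) - R)).2⟩
  have hgint' : Integrable (C.indicator g) := (integrable_indicator_iff hCmeas).2 hgint
  -- the comparison of integrals
  have hle : ∀ t, S.indicator (fun _ => (1:ℝ)) t ≤ C.indicator g t := by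
    intro t
    by_cases ht : t ∈ S
    · obtain ⟨htC, hgt⟩ := hSsub t ht
      rw [Set.indicator_of_mem ht, Set.indicator_of_mem htC, hgt]
    · rw [Set.indicator_of_notMem ht]
      exact Set.indicator_nonneg (fun y _ => hgnn y) t
  have hmono : ∫ t, S.indicator (fun _ => (1:ℝ)) t ≤ ∫ t, C.indicator g t :=
    integral_mono_of_nonneg
      (ae_of_all _ fun t => Set.indicator_nonneg (fun _ _ => zero_le_one) t)
      hgint' (ae_of_all _ hle)
  have hS_int : ∫ t, S.indicator (fun _ => (1:ℝ)) t = (volume S).toReal := by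
    rw [integral_indicator_const (1:ℝ) hSmeas, smul_eq_mul, mul_one]; rfl
  have hC_int : ∫ t, C.indicator g t = ∫ t in C, g t := integral_indicator hCmeas
  -- compute the volume
  have hw0 : (0:ℝ) ≤ X/7 - X/8 := by linarith
  have hvolS' : (volume S).toReal = δ * (X/7 - X/8)^m := by
    rw [hvolS, ENNReal.toReal_mul, ENNReal.toReal_pow, ENNReal.toReal_ofReal hδ0,
      ENNReal.toReal_ofReal hw0]
  -- final arithmetic
  have hfinal : 4/(5*c) * (1/56)^m * X ^ ((↑(m+1):ℝ) - c - c*η) = δ * (X/7 - X/8)^m := by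
    have h56 : X/7 - X/8 = X * (1/56) := by ring
    have hXm : X ^ (m:ℝ) = X ^ m := Real.rpow_natCast X m
    have hsplit : X ^ ((↑(m+1):ℝ) - c - c*η) = X ^ (1 - c - c*η) * X ^ (m:ℝ) := by
      rw [← Real.rpow_add hX0]; congr 1; push_cast; ring
    rw [h56, mul_pow, hδ_def, hsplit, hXm]; ring
  calc 4/(5*c) * (1/56)^m * X ^ ((↑(m+1):ℝ) - c - c*η)
      = (volume S).toReal := by rw [hfinal, hvolS']
    _ ≤ ∫ t in C, g t := by rw [← hS_int, ← hC_int]; exact hmono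
end
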